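/- arXiv:math/0404393 — 2 statements merged into one kernel-verified Lean document; each statement's English description precedes it below -/
import Mathlib

section
/- Let ω ∈ Φ be a long root (i.e. ⟨ω,ω⟩ = 2). Suppose d is a positive integer, d₁, …, dₙ are positive integers with d₁ + ⋯ + dₙ ≤ d, and α₁, …, αₙ ∈ Φ are roots such that d·ω = d₁·α₁ + ⋯ + dₙ·αₙ in E. Then αⱼ = ω for every j, and consequently d₁ + ⋯ + dₙ = d. -/
open scoped RealInnerProductSpace BigOperators

/-- A finite subset `Φ` of a real inner product space is a reduced crystallographic
root system, normalized so that every root has squared length `1` or `2`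
(no `G₂`-factors). -/
def RootSystemNoG2 {E : Type*} [NormedAddCommGroup E] [InnerProductSpace ℝ E]
    (Φ : Finset E) : Prop :=
  (∀ α ∈ Φ, α ≠ 0) ∧
  (∀ α ∈ Φ, ∀ β ∈ Φ, β - (2 * ⟪β, α⟫ / ⟪α, α⟫) • α ∈ Φ) ∧
  (∀ α ∈ Φ, ∀ β ∈ Φ, ∃ n : ℤ, 2 * ⟪β, α⟫ / ⟪α, α⟫ = (n : ℝ)) ∧
  (∀ α ∈ Φ, ∀ t : ℝ, t • α ∈ Φ → t = 1 ∨ t = -1) ∧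
  (∀ α ∈ Φ, ⟪α, α⟫ = 1 ∨ ⟪α, α⟫ = 2)

/-- If a long root `ω` is written as `d • ω = ∑ dⱼ • αⱼ` with positive integers
`d, dⱼ`, `∑ dⱼ ≤ d` and roots `αⱼ`, then every `αⱼ = ω` and `∑ dⱼ = d`. -/
theorem long_weight_combination {E : Type*} [NormedAddCommGroup E] [InnerProductSpace ℝ E]
    (Φ : Finset E) (hΦ : RootSystemNoG2 Φ)
    (ω : E) (hω : ω ∈ Φ) (hlong : ⟪ω, ω⟫ = 2)
    (n : ℕ) (α : Fin n → E) (hα : ∀ j, α j ∈ Φ)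
    (d : ℕ) (hd : 0 < d)
    (c : Fin n → ℕ) (hc : ∀ j, 0 < c j)
    (hsum : ∑ j, c j ≤ d)
    (heq : (d : ℝ) • ω = ∑ j, (c j : ℝ) • α j) :
    (∀ j, α j = ω) ∧ ∑ j, c j = d := by
  obtain ⟨hne, _, _, _, hlen⟩ := hΦ
  -- every root pairs with ω at most 2
  have key : ∀ β ∈ Φ, ⟪β, ω⟫ ≤ 2 ∧ (⟪β, ω⟫ = 2 → β = ω) := by
    intro β hβ
    have hcs : ⟪β, ω⟫ * ⟪β, ω⟫ ≤ ⟪β, β⟫ * ⟪ω, ω⟫ := real_inner_mul_inner_self_le β ω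
    have hββ : ⟪β, β⟫ ≤ 2 := by rcases hlen β hβ with h | h <;> linarith
    have hle : ⟪β, ω⟫ ≤ 2 := by nlinarith
    refine ⟨hle, fun h2 => ?_⟩
    have hββ2 : ⟪β, β⟫ = 2 := by nlinarith
    have hz : ⟪β - ω, β - ω⟫ = 0 := by
      have h2' : ⟪ω, β⟫ = 2 := by rw [real_inner_comm]; exact h2
      simp only [inner_sub_sub_self]
      rw [real_inner_comm β ω]
      linarith
    exact sub_eq_zero.mp (inner_self_eq_zero.mp hz)
  -- take inner product of heq with ω
  have hip : (d : ℝ) * 2 = ∑ j, (c j : ℝ) * ⟪α j, ω⟫ := by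
    have := congrArg (fun x => ⟪x, ω⟫) heq
    simpa [sum_inner, real_inner_smul_left, hlong, show ‖ω‖ ^ 2 = 2 by rw [← real_inner_self_eq_norm_sq]; exact hlong] using this
  have hnonneg : ∀ j ∈ Finset.univ, (0:ℝ) ≤ (c j : ℝ) * (2 - ⟪α j, ω⟫) := by
    intro j _
    have := (key (α j) (hα j)).1
    have : (0:ℝ) ≤ 2 - ⟪α j, ω⟫ := by linarith
    positivity
  have hsum' : ∑ j, (c j : ℝ) * (2 - ⟪α j, ω⟫) = 2 * (∑ j, (c j : ℝ)) - (d : ℝ) * 2 := by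
    rw [hip]
    rw [Finset.mul_sum, ← Finset.sum_sub_distrib]
    congr 1; ext j; ring
  have hcast : (∑ j, (c j : ℝ)) ≤ (d : ℝ) := by
    have : ((∑ j, c j : ℕ) : ℝ) ≤ (d : ℝ) := Nat.cast_le.mpr hsum
    simpa using this
  have hsumle : ∑ j, (c j : ℝ) * (2 - ⟪α j, ω⟫) ≤ 0 := by
    rw [hsum']; linarith
  have hzero : ∀ j ∈ Finset.univ, (c j : ℝ) * (2 - ⟪α j, ω⟫) = 0 := by
    have h0 : ∑ j, (c j : ℝ) * (2 - ⟪α j, ω⟫) = 0 :=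
      le_antisymm hsumle (Finset.sum_nonneg hnonneg)
    exact (Finset.sum_eq_zero_iff_of_nonneg hnonneg).mp h0
  have hall : ∀ j, α j = ω := by
    intro j
    have h := hzero j (Finset.mem_univ j)
    have hcj : (0:ℝ) < (c j : ℝ) := by exact_mod_cast hc j
    have : ⟪α j, ω⟫ = 2 := by
      rcases mul_eq_zero.mp h with h' | h'
      · exact absurd h' (ne_of_gt hcj)
      · linarith
    exact (key (α j) (hα j)).2 this
  refine ⟨hall, ?_⟩
  have : (d : ℝ) • ω = (∑ j, (c j : ℝ)) • ω := by
    rw [heq, Finset.sum_smul]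
    exact Finset.sum_congr rfl fun j _ => by rw [hall j]
  have hωne : ω ≠ 0 := hne ω hω
  have hcoef : (d : ℝ) = ∑ j, (c j : ℝ) := by
    by_contra hne'
    exact hωne (by
      have := sub_eq_zero.mpr this
      rw [← sub_smul] at this
      exact (smul_eq_zero.mp this).resolve_left (sub_ne_zero.mpr hne'))
  have : ((∑ j, c j : ℕ) : ℝ) = (d : ℝ) := by push_cast; rw [hcoef]
  exact_mod_cast this
end

section
/- Let ω ∈ Φ be a short root (i.e. ⟨ω,ω⟩ = 1). Suppose d is a positive integer, d₁, …, dₙ are positive integers with d₁ + ⋯ + dₙ ≤ d, and α₁, …, αₙ ∈ Φ are roots such that d·ω = d₁·α₁ + ⋯ + dₙ·αₙ in E. Then either αⱼ = ω for some j, or there exist two indices j₀ ≠ j₁ such that α_{j₀} and α_{j₁} are long roots, ⟨α_{j₀}, α_{j₁}⟩ = 0, and α_{j₀} + α_{j₁} = 2ω (so that ω = ½(α_{j₀} + α_{j₁}) is the average of two orthogonal long roots appearing in the relation). -/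
open scoped RealInnerProductSpace BigOperators

/-- If a short root `ω` is written as `d • ω = ∑ dⱼ • αⱼ` with positive integers
`d, dⱼ`, `∑ dⱼ ≤ d` and roots `αⱼ`, then either some `αⱼ = ω`, or two of the
`αⱼ` are orthogonal long roots summing to `2ω`. -/
theorem short_weight_combination {E : Type*} [NormedAddCommGroup E] [InnerProductSpace ℝ E]
    (Φ : Finset E) (hΦ : RootSystemNoG2 Φ)
    (ω : E) (hω : ω ∈ Φ) (hshort : ⟪ω, ω⟫ = 1)
    (n : ℕ) (α : Fin n → E) (hα : ∀ j, α j ∈ Φ)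
    (d : ℕ) (hd : 0 < d)
    (c : Fin n → ℕ) (hc : ∀ j, 0 < c j)
    (hsum : ∑ j, c j ≤ d)
    (heq : (d : ℝ) • ω = ∑ j, (c j : ℝ) • α j) :
    (∃ j, α j = ω) ∨
      ∃ j₀ j₁ : Fin n, j₀ ≠ j₁ ∧
        ⟪α j₀, α j₀⟫ = 2 ∧ ⟪α j₁, α j₁⟫ = 2 ∧
        ⟪α j₀, α j₁⟫ = 0 ∧ α j₀ + α j₁ = (2 : ℝ) • ω := by
  obtain ⟨h0, hrefl, hcrys, hred, hlen⟩ := hΦ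
  -- length bounds
  have hαsq : ∀ j, ⟪α j, α j⟫ ≤ 2 := by
    intro j; rcases hlen (α j) (hα j) with h | h <;> linarith
  -- inner product with ω is at most 1
  have hle : ∀ j, ⟪α j, ω⟫ ≤ 1 := by
    intro j
    obtain ⟨m, hm⟩ := hcrys ω hω (α j) (hα j)
    rw [hshort, div_one] at hm
    by_contra hcon
    push_neg at hcon
    have hm3 : (3 : ℝ) ≤ (m : ℝ) := by
      have : (2 : ℤ) < m := by exact_mod_cast (by linarith : (2:ℝ) < (m:ℝ))
      exact_mod_cast this
    have hcs : |⟪α j, ω⟫| ≤ ‖α j‖ * ‖ω‖ := abs_real_inner_le_norm _ _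
    have h1 : ⟪α j, ω⟫ ≤ ‖α j‖ * ‖ω‖ := (abs_le.mp hcs).2
    have h2 : ⟪α j, α j⟫ = ‖α j‖ ^ 2 := real_inner_self_eq_norm_sq _
    have h3 : ⟪ω, ω⟫ = ‖ω‖ ^ 2 := real_inner_self_eq_norm_sq _
    nlinarith [hαsq j, norm_nonneg (α j), norm_nonneg ω]
  -- d = ∑ c j * ⟪α j, ω⟫
  have hsum_inner : (d : ℝ) = ∑ j, (c j : ℝ) * ⟪α j, ω⟫ := by
    have := congrArg (fun x : E => ⟪x, ω⟫) heq
    simpa [sum_inner, real_inner_smul_left, hshort,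
      (by rw [← real_inner_self_eq_norm_sq]; exact hshort : ‖ω‖ ^ 2 = 1)] using this
  have hcastsum : (∑ j, (c j : ℝ)) ≤ (d : ℝ) := by
    exact_mod_cast (by exact_mod_cast hsum : ((∑ j, c j : ℕ) : ℝ) ≤ (d : ℝ))
  -- all inner products equal 1
  have hone : ∀ j, ⟪α j, ω⟫ = 1 := by
    intro j
    by_contra hne
    have hlt : ⟪α j, ω⟫ < 1 := lt_of_le_of_ne (hle j) hne
    have hstrict : ∑ i, (c i : ℝ) * ⟪α i, ω⟫ < ∑ i, (c i : ℝ) := by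
      refine Finset.sum_lt_sum (fun i _ => ?_) ⟨j, Finset.mem_univ j, ?_⟩
      · nlinarith [hle i, (Nat.cast_nonneg (c i) : (0:ℝ) ≤ c i)]
      · have hcj : (0 : ℝ) < c j := by exact_mod_cast hc j
        nlinarith
    linarith [hsum_inner]
  have hdsum : (d : ℝ) = ∑ j, (c j : ℝ) := by
    rw [hsum_inner]; simp [hone]
  by_cases hex : ∃ j, ⟪α j, α j⟫ = 1
  · obtain ⟨j, hj⟩ := hex
    left
    refine ⟨j, ?_⟩
    have : ⟪α j - ω, α j - ω⟫ = 0 := by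
      rw [real_inner_sub_sub_self, hj, hone j, hshort]; ring
    have := inner_self_eq_zero.mp this
    exact sub_eq_zero.mp this
  · push_neg at hex
    have hlong : ∀ j, ⟪α j, α j⟫ = 2 := by
      intro j; rcases hlen (α j) (hα j) with h | h
      · exact absurd h (hex j)
      · exact h
    -- the big sum identity
    have hS : ∑ i, ∑ j, (c i : ℝ) * ((c j : ℝ) * ⟪α i, α j⟫) = (d : ℝ) ^ 2 := by
      have h0 : ⟪(d : ℝ) • ω, (d : ℝ) • ω⟫ = (d : ℝ) ^ 2 := by
        rw [real_inner_smul_left, real_inner_smul_right, hshort]; ring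
      rw [heq] at h0
      rw [← h0, sum_inner]
      refine Finset.sum_congr rfl fun i _ => ?_
      rw [inner_sum]
      refine Finset.sum_congr rfl fun j _ => ?_
      rw [real_inner_smul_left, real_inner_smul_right]
    have hT : ∑ i, ∑ j, (c i : ℝ) * (c j : ℝ) = (d : ℝ) ^ 2 := by
      simp only [← Finset.mul_sum, ← Finset.sum_mul, ← hdsum]; ring
    -- find an orthogonal-ish pair
    have hpair : ∃ i j : Fin n, i ≠ j ∧ ⟪α i, α j⟫ < 1 := by
      by_contra hcon
      push_neg at hcon
      have hn : 0 < n := by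
        rcases Nat.eq_zero_or_pos n with h | h
        · subst h
          simp at hdsum
          omega
        · exact h
      have hstrict : ∑ i, ∑ j, (c i : ℝ) * (c j : ℝ)
          < ∑ i, ∑ j, (c i : ℝ) * ((c j : ℝ) * ⟪α i, α j⟫) := by
        have key : ∀ i : Fin n, ∑ j, (c i : ℝ) * (c j : ℝ)
            < ∑ j, (c i : ℝ) * ((c j : ℝ) * ⟪α i, α j⟫) := by
          intro i
          refine Finset.sum_lt_sum (fun j _ => ?_) ⟨i, Finset.mem_univ i, ?_⟩
          · rcases eq_or_ne i j with rfl | hij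
            · nlinarith [hlong i, (Nat.cast_pos.mpr (hc i) : (0:ℝ) < c i)]
            · have h1 := hcon i j hij
              nlinarith [mul_nonneg (mul_nonneg
                (Nat.cast_nonneg (c i) : (0:ℝ) ≤ c i)
                (Nat.cast_nonneg (c j) : (0:ℝ) ≤ c j)) (sub_nonneg.mpr h1)]
          · nlinarith [hlong i, (Nat.cast_pos.mpr (hc i) : (0:ℝ) < c i)]
        exact Finset.sum_lt_sum (fun i _ => le_of_lt (key i))
          ⟨⟨0, hn⟩, Finset.mem_univ _, key ⟨0, hn⟩⟩
      rw [hS, hT] at hstrict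
      exact lt_irrefl _ hstrict
    obtain ⟨i, j, hij, hlt⟩ := hpair
    -- integrality: ⟪α j, α i⟫ ∈ ℤ
    obtain ⟨m, hm⟩ := hcrys (α i) (hα i) (α j) (hα j)
    rw [hlong i] at hm
    have hmval : ⟪α i, α j⟫ = (m : ℝ) := by
      rw [real_inner_comm]; linarith [hm]
    -- lower bound via Cauchy-Schwarz on α i - ω, α j - ω
    have hni : ‖α i - ω‖ = 1 := by
      have h1 : ⟪α i - ω, α i - ω⟫ = 1 := by
        rw [real_inner_sub_sub_self, hlong i, hone i, hshort]; ring
      have h2 : ⟪α i - ω, α i - ω⟫ = ‖α i - ω‖ ^ 2 := real_inner_self_eq_norm_sq _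
      nlinarith [norm_nonneg (α i - ω)]
    have hnj : ‖α j - ω‖ = 1 := by
      have h1 : ⟪α j - ω, α j - ω⟫ = 1 := by
        rw [real_inner_sub_sub_self, hlong j, hone j, hshort]; ring
      have h2 : ⟪α j - ω, α j - ω⟫ = ‖α j - ω‖ ^ 2 := real_inner_self_eq_norm_sq _
      nlinarith [norm_nonneg (α j - ω)]
    have hcs : |⟪α i - ω, α j - ω⟫| ≤ ‖α i - ω‖ * ‖α j - ω‖ :=
      abs_real_inner_le_norm _ _
    rw [hni, hnj, mul_one] at hcs
    have hωi : ⟪ω, α i⟫ = 1 := by rw [real_inner_comm]; exact hone i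
    have hωj : ⟪ω, α j⟫ = 1 := by rw [real_inner_comm]; exact hone j
    have hexp : ⟪α i - ω, α j - ω⟫ = ⟪α i, α j⟫ - 1 := by
      rw [inner_sub_left, inner_sub_right, inner_sub_right, hone i, hshort, hωj]
      ring
    have hge : (0 : ℝ) ≤ ⟪α i, α j⟫ := by
      have := (abs_le.mp hcs).1
      rw [hexp] at this
      linarith
    have hm0 : m = 0 := by
      have h1 : (0 : ℝ) ≤ (m : ℝ) := by rw [← hmval]; exact hge
      have h2 : (m : ℝ) < 1 := by rw [← hmval]; exact hlt
      have h3 : (0 : ℤ) ≤ m := by exact_mod_cast h1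
      have h4 : m < 1 := by exact_mod_cast h2
      omega
    have hzero : ⟪α i, α j⟫ = 0 := by rw [hmval, hm0]; simp
    have hzero' : ⟪α j, α i⟫ = 0 := by rw [real_inner_comm]; exact hzero
    right
    refine ⟨i, j, hij, hlong i, hlong j, hzero, ?_⟩
    have hv : ⟪α i + α j - (2:ℝ) • ω, α i + α j - (2:ℝ) • ω⟫ = 0 := by
      simp only [inner_sub_left, inner_sub_right, inner_add_left, inner_add_right,
        real_inner_smul_left, real_inner_smul_right]
      rw [hlong i, hlong j, hzero, hzero', hshort, hone i, hone j, hωi, hωj]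
      ring
    have := inner_self_eq_zero.mp hv
    have := sub_eq_zero.mp this
    exact this
end
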